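/- In the first-order tangent algebra A = K[X]⧸((X - C s)(X - C t)), the map κ : A → A defined by κ(v) = algebraMap K A (α(v) + β(v)) - v is a K-algebra homomorphism (hence, being involutive, a K-algebra automorphism): κ(1) = 1, κ(v * w) = κ(v) * κ(w), κ(κ(v)) = v for all v, w ∈ A, and it exchanges source and target: α(κ(v)) = β(v) and β(κ(v)) = α(v). -/

import Mathlib

open Polynomial

/-- The defining ideal of the first-order tangent algebra `K_{(t,s)}`. -/
noncomputable abbrev tIdeal (K : Type*) [CommRing K] (t s : K) : Ideal (Polynomial K) :=
  Ideal.span {(X - C s) * (X - C t)}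

/-- The first-order tangent algebra `K_{(t,s)} = K[X] ⧸ ((X - C s) * (X - C t))`. -/
abbrev TangentAlgebra₁ (K : Type*) [CommRing K] (t s : K) :=
  Polynomial K ⧸ tIdeal K t s

/-- The map `κ(v) = algebraMap K A (α(v) + β(v)) - v` is an involutive `K`-algebra
automorphism of the first-order tangent algebra exchanging source and target. -/
theorem kappa_is_involutive_automorphism (K : Type*) [CommRing K] (t s : K)
    (α β : TangentAlgebra₁ K t s →ₐ[K] K)
    (hα : ∀ P : Polynomial K, α (Ideal.Quotient.mk (tIdeal K t s) P) = P.eval s)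
    (hβ : ∀ P : Polynomial K, β (Ideal.Quotient.mk (tIdeal K t s) P) = P.eval t)
    (κ : TangentAlgebra₁ K t s → TangentAlgebra₁ K t s)
    (hκ : ∀ v, κ v = algebraMap K (TangentAlgebra₁ K t s) (α v + β v) - v) :
    κ 1 = 1 ∧ (∀ v w, κ (v * w) = κ v * κ w) ∧ (∀ v, κ (κ v) = v) ∧
      (∀ v, α (κ v) = β v) ∧ (∀ v, β (κ v) = α v) := by
  have hc : ∀ r : K, algebraMap K (TangentAlgebra₁ K t s) r
      = Ideal.Quotient.mk (tIdeal K t s) (C r) := fun r => rfl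
  have hακ : ∀ v, α (κ v) = β v := by
    intro v
    simp only [hκ, map_sub, AlgHom.commutes, Algebra.algebraMap_self, RingHom.id_apply]
    ring
  have hβκ : ∀ v, β (κ v) = α v := by
    intro v
    simp only [hκ, map_sub, AlgHom.commutes, Algebra.algebraMap_self, RingHom.id_apply]
    ring
  have key : ∀ v w : TangentAlgebra₁ K t s,
      algebraMap K (TangentAlgebra₁ K t s) (α v) * algebraMap K (TangentAlgebra₁ K t s) (β w)
        + algebraMap K (TangentAlgebra₁ K t s) (β v) * algebraMap K (TangentAlgebra₁ K t s) (α w)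
        - (algebraMap K (TangentAlgebra₁ K t s) (α v)
            + algebraMap K (TangentAlgebra₁ K t s) (β v)) * w
        - (algebraMap K (TangentAlgebra₁ K t s) (α w)
            + algebraMap K (TangentAlgebra₁ K t s) (β w)) * v
        + 2 * (v * w) = 0 := by
    intro v w
    obtain ⟨P, rfl⟩ := Ideal.Quotient.mk_surjective v
    obtain ⟨Q, rfl⟩ := Ideal.Quotient.mk_surjective w
    rw [hα, hβ, hα, hβ]
    have h0 : (Ideal.Quotient.mk (tIdeal K t s))
        ((P - C (P.eval s)) * (Q - C (Q.eval t))
          + (P - C (P.eval t)) * (Q - C (Q.eval s))) = 0 := by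
      rw [Ideal.Quotient.eq_zero_iff_mem, Ideal.mem_span_singleton]
      refine dvd_add (mul_dvd_mul ?_ ?_) ?_
      · exact X_sub_C_dvd_sub_C_eval
      · exact X_sub_C_dvd_sub_C_eval
      · have h2 := mul_dvd_mul (X_sub_C_dvd_sub_C_eval (a := t) (p := P))
          (X_sub_C_dvd_sub_C_eval (a := s) (p := Q))
        rwa [mul_comm (X - C t)] at h2
    rw [hc, hc, hc, hc]
    rw [← h0]
    simp only [map_add, map_sub, map_mul, map_ofNat]
    ring
  refine ⟨?_, ?_, ?_, hακ, hβκ⟩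
  · rw [hκ, map_one, map_one, map_add, map_one]
    ring
  · intro v w
    have k := key v w
    rw [hκ, hκ, hκ, map_mul α, map_mul β]
    simp only [map_add, map_mul]
    linear_combination -k
  · intro v
    rw [hκ (κ v), hακ, hβκ, hκ v]
    ring
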